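/- arXiv:1504.00391 — 3 statements merged into one kernel-verified Lean document; each statement's English description precedes it below -/
import Mathlib

section
/- Let C be a permutation-invariant partition of the player set of a finite normal-form game with identical interests, let q ∈ Δ^n, let q̄ be its centroid distribution, and let ε ≥ 0. If p ∈ BR^ε(q̄), then the centroid distribution p̄ of p also satisfies p̄ ∈ BR^ε(q̄). -/
open MeasureTheory Filter Topology

noncomputable section

namespace ECFP

variable {ι A κ : Type*}

/-- The mixed-strategy simplex over a finite action set `Y` inside the action universe `A`. -/
def simplex (Y : Finset A) : Set (A → ℝ) :=
  {p | (∀ a, 0 ≤ p a) ∧ (∀ a, a ∉ Y → p a = 0) ∧ ∑ a ∈ Y, p a = 1}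

/-- The space `Δⁿ` of joint mixed strategies. -/
def Delta (Y : ι → Finset A) : Set (ι → A → ℝ) :=
  {p | ∀ i, p i ∈ simplex (Y i)}

variable [Fintype ι] [DecidableEq ι] [Fintype A] [DecidableEq κ]

/-- The mixed extension of the common utility `u`:
`U(p₁,…,pₙ) = ∑_y u(y) p₁(y₁)⋯pₙ(yₙ)`. -/
def U (u : (ι → A) → ℝ) (p : ι → A → ℝ) : ℝ :=
  ∑ y : ι → A, u y * ∏ i, p i (y i)

/-- The `ε`-best-response set of player `i` against the joint strategy `p`
(only the components `p_{-i}` matter, since player `i`'s component is overwritten):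
`{pᵢ ∈ Δᵢ : U(pᵢ,p_{-i}) ≥ U(qᵢ,p_{-i}) - ε  ∀ qᵢ ∈ Δᵢ}`. -/
def BRi (Y : ι → Finset A) (u : (ι → A) → ℝ) (ε : ℝ) (p : ι → A → ℝ) (i : ι) :
    Set (A → ℝ) :=
  {pi | pi ∈ simplex (Y i) ∧
    ∀ qi ∈ simplex (Y i),
      U u (Function.update p i pi) ≥ U u (Function.update p i qi) - ε}

/-- The joint `ε`-best-response set `BR^ε(p) = (BR₁^ε(p_{-1}),…,BRₙ^ε(p_{-n}))`. -/
def BR (Y : ι → Finset A) (u : (ι → A) → ℝ) (ε : ℝ) (p : ι → A → ℝ) :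
    Set (ι → A → ℝ) :=
  {b | ∀ i, b i ∈ BRi Y u ε p i}

/-- The profile obtained from `y` by swapping the strategies of players `i` and `j`. -/
def swapStrat (y : ι → A) (i j : ι) : ι → A :=
  Function.update (Function.update y i (y j)) j (y i)

/-- `cls : ι → κ` encodes a permutation-invariant partition of the player set (the classes
are the fibers of `cls`): players in the same class have the same action set, and the utility
is invariant under swapping the strategies of two same-class players in any strategy profile. -/
def PermInvariant (Y : ι → Finset A) (u : (ι → A) → ℝ) (cls : ι → κ) : Prop :=
  ∀ i j : ι, cls i = cls j →
    Y i = Y j ∧ ∀ y : ι → A, (∀ k, y k ∈ Y k) → u (swapStrat y i j) = u y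

/-- The equivalence class (as a finset of players) of player `i`. -/
def cluster (cls : ι → κ) (i : ι) : Finset ι :=
  Finset.univ.filter (fun j => cls j = cls i)

/-- The centroid distribution `p̄`: player `i` is assigned the average of the strategies of
the players in `i`'s class. -/
def centroid (cls : ι → κ) (p : ι → A → ℝ) : ι → A → ℝ :=
  fun i => ((cluster cls i).card : ℝ)⁻¹ • ∑ j ∈ cluster cls i, p j

/-- A joint strategy is class-constant if same-class players use identical strategies. -/
def classConst (cls : ι → κ) (p : ι → A → ℝ) : Prop :=
  ∀ i j, cls i = cls j → p i = p j

/-- The set of Nash equilibria. -/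
def NE (Y : ι → Finset A) (u : (ι → A) → ℝ) : Set (ι → A → ℝ) :=
  {p | p ∈ Delta Y ∧ ∀ i, ∀ qi ∈ simplex (Y i),
    U u (Function.update p i qi) ≤ U u p}

/-- The set of symmetric Nash equilibria relative to the partition `cls`. -/
def SNE (Y : ι → Finset A) (u : (ι → A) → ℝ) (cls : ι → κ) : Set (ι → A → ℝ) :=
  {p | p ∈ NE Y u ∧ classConst cls p}

/-- The set of mean-centric equilibria relative to the partition `cls`:
`U(pᵢ, p̄_{-i}) ≥ U(pᵢ', p̄_{-i})` for all `pᵢ' ∈ Δᵢ` and all `i`. -/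
def MCE (Y : ι → Finset A) (u : (ι → A) → ℝ) (cls : ι → κ) : Set (ι → A → ℝ) :=
  {p | p ∈ Delta Y ∧ ∀ i, ∀ qi ∈ simplex (Y i),
    U u (Function.update (centroid cls p) i qi)
      ≤ U u (Function.update (centroid cls p) i (p i))}

/-- `V(p) = (1/n) ∑ᵢ U(pᵢ, p̄_{-i})`. -/
def Vfun (u : (ι → A) → ℝ) (cls : ι → κ) (p : ι → A → ℝ) : ℝ :=
  (Fintype.card ι : ℝ)⁻¹ * ∑ i, U u (Function.update (centroid cls p) i (p i))

/-- A discrete-time ECFP process w.r.t. `(Γ, 𝒞)`: `q(1) = a(1)`,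
`q(t+1) = q(t) + γₜ (a(t+1) − q(t))` and `a(t+1) ∈ BR^{εₜ}(q̄(t))` for all `t`
(time is indexed by `ℕ`, i.e. `t = 0` plays the role of `t = 1` in the paper). -/
structure IsECFP (Y : ι → Finset A) (u : (ι → A) → ℝ) (cls : ι → κ)
    (γ ε : ℕ → ℝ) (a q : ℕ → ι → A → ℝ) : Prop where
  a_init_mem : a 0 ∈ Delta Y
  q_mem : ∀ t, q t ∈ Delta Y
  init : q 0 = a 0
  step : ∀ t, q (t + 1) = q t + γ t • (a (t + 1) - q t)
  br : ∀ t, a (t + 1) ∈ BR Y u (ε t) (centroid cls (q t))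

/-- A solution of the differential inclusion `ẋ ∈ F(x)` taking values in `Δⁿ`:
an everywhere-`Δⁿ`-valued trajectory on `[0,∞)` which is the integral of a locally
integrable selection `g(t) ∈ F(x(t))` (a.e.). -/
def IsSolution (Y : ι → Finset A) (F : (ι → A → ℝ) → Set (ι → A → ℝ))
    (x : ℝ → ι → A → ℝ) : Prop :=
  (∀ t : ℝ, 0 ≤ t → x t ∈ Delta Y) ∧
  ∃ g : ℝ → ι → A → ℝ,
    LocallyIntegrableOn g (Set.Ici (0 : ℝ)) ∧
    (∀ᵐ t ∂(volume.restrict (Set.Ici (0 : ℝ))), g t ∈ F (x t)) ∧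
    ∀ t : ℝ, 0 ≤ t → x t = x 0 + ∫ s in Set.Ioc (0 : ℝ) t, g s

/-- Right-hand side of the joint CT-ECFP differential inclusion `q̇ ∈ BR(q̄) − q`. -/
def Fjoint (Y : ι → Finset A) (u : (ι → A) → ℝ) (cls : ι → κ)
    (q : ι → A → ℝ) : Set (ι → A → ℝ) :=
  (fun b => b - q) '' BR Y u 0 (centroid cls q)

/-- Right-hand side of the centroid CT-ECFP differential inclusion `ẏ ∈ BR(y) − y`. -/
def Fcent (Y : ι → Finset A) (u : (ι → A) → ℝ)
    (y : ι → A → ℝ) : Set (ι → A → ℝ) :=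
  (fun b => b - y) '' BR Y u 0 y

/-- The ω-limit set of a continuous-time trajectory: all limits of sequences
`x(t_k)` with `t_k → ∞`. -/
def omegaLimitSet (x : ℝ → ι → A → ℝ) : Set (ι → A → ℝ) :=
  {p | ∃ tk : ℕ → ℝ, Tendsto tk atTop atTop ∧ Tendsto (fun k => x (tk k)) atTop (𝓝 p)}

/-- The set of limit points of a (discrete-time) sequence. -/
def seqLimitPoints (q : ℕ → ι → A → ℝ) : Set (ι → A → ℝ) :=
  {p | ∃ φ : ℕ → ℕ, StrictMono φ ∧ Tendsto (fun k => q (φ k)) atTop (𝓝 p)}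

/-- A compact set `X ⊆ Δⁿ` is internally chain transitive for the inclusion `ẋ ∈ F(x)`:
any two points of `X` can be joined, for every `ε > 0` and `T > 0`, by finitely many
solution pieces of duration `> T` staying in `X`, with jumps of size `≤ ε`. -/
def InternallyChainTransitive (Y : ι → Finset A)
    (F : (ι → A → ℝ) → Set (ι → A → ℝ)) (X : Set (ι → A → ℝ)) : Prop :=
  IsCompact X ∧ X ⊆ Delta Y ∧
  ∀ ξ ∈ X, ∀ η ∈ X, ∀ ε : ℝ, 0 < ε → ∀ T : ℝ, 0 < T →
    ∃ k : ℕ, 0 < k ∧ ∃ x : ℕ → ℝ → ι → A → ℝ, ∃ tt : ℕ → ℝ,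
      (∀ i < k, IsSolution Y F (x i)) ∧
      (∀ i < k, T < tt i) ∧
      (∀ i < k, ∀ s : ℝ, 0 ≤ s → s ≤ tt i → x i s ∈ X) ∧
      (∀ i, i + 1 < k → ‖x i (tt i) - x (i + 1) 0‖ ≤ ε) ∧
      ‖x 0 0 - ξ‖ ≤ ε ∧ ‖x (k - 1) (tt (k - 1)) - η‖ ≤ ε

variable [Nonempty ι]

lemma mem_cluster_self (cls : ι → κ) (i : ι) : i ∈ cluster cls i := by
  simp [cluster]

lemma cluster_card_pos (cls : ι → κ) (i : ι) : 0 < (cluster cls i).card :=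
  Finset.card_pos.mpr ⟨i, mem_cluster_self cls i⟩

lemma cls_of_mem_cluster {cls : ι → κ} {i j : ι} (h : j ∈ cluster cls i) :
    cls j = cls i := by
  simpa [cluster] using h

lemma cluster_eq_of_cls_eq (cls : ι → κ) {i j : ι} (h : cls i = cls j) :
    cluster cls i = cluster cls j := by
  simp [cluster, h]

lemma centroid_eq_of_cls_eq (cls : ι → κ) (p : ι → A → ℝ) {i j : ι}
    (h : cls i = cls j) : centroid cls p i = centroid cls p j := by
  simp [centroid, cluster_eq_of_cls_eq cls h]

lemma centroid_mem_simplex (cls : ι → κ) (p : ι → A → ℝ) (Z : Finset A) (i : ι)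
    (h : ∀ j ∈ cluster cls i, p j ∈ simplex Z) :
    centroid cls p i ∈ simplex Z := by
  have hc : (0 : ℝ) < ((cluster cls i).card : ℝ) := by
    exact_mod_cast cluster_card_pos cls i
  refine ⟨?_, ?_, ?_⟩
  · intro a
    simp only [centroid, Pi.smul_apply, Finset.sum_apply, smul_eq_mul]
    exact mul_nonneg (by positivity) (Finset.sum_nonneg fun j hj => (h j hj).1 a)
  · intro a ha
    simp only [centroid, Pi.smul_apply, Finset.sum_apply, smul_eq_mul]
    rw [Finset.sum_eq_zero fun j hj => (h j hj).2.1 a ha, mul_zero]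
  · simp only [centroid, Pi.smul_apply, Finset.sum_apply, smul_eq_mul]
    rw [← Finset.mul_sum, Finset.sum_comm]
    rw [Finset.sum_congr rfl fun j hj => (h j hj).2.2]
    simp [mul_comm, mul_inv_cancel₀ hc.ne']

lemma prod_update_apply (r : ι → A → ℝ) (i : ι) (pi : A → ℝ) (y : ι → A) :
    ∏ k, Function.update r i pi k (y k)
      = pi (y i) * ∏ k ∈ Finset.univ.erase i, r k (y k) := by
  rw [← Finset.mul_prod_erase _ _ (Finset.mem_univ i), Function.update_self]
  congr 1
  exact Finset.prod_congr rfl fun k hk => by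
    rw [Function.update_of_ne (Finset.ne_of_mem_erase hk)]

lemma U_update_centroid (u : (ι → A) → ℝ) (r : ι → A → ℝ) (i : ι)
    (s : Finset ι) (p : ι → A → ℝ) :
    U u (Function.update r i ((s.card : ℝ)⁻¹ • ∑ j ∈ s, p j))
      = (s.card : ℝ)⁻¹ * ∑ j ∈ s, U u (Function.update r i (p j)) := by
  simp only [U, prod_update_apply, Pi.smul_apply, Finset.sum_apply, smul_eq_mul]
  calc ∑ x : ι → A, u x * (((s.card : ℝ)⁻¹ * ∑ j ∈ s, p j (x i)) *
        ∏ k ∈ Finset.univ.erase i, r k (x k))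
      = ∑ x : ι → A, ∑ j ∈ s, (s.card : ℝ)⁻¹ *
        (u x * (p j (x i) * ∏ k ∈ Finset.univ.erase i, r k (x k))) := by
        refine Finset.sum_congr rfl fun x _ => ?_
        rw [Finset.mul_sum, Finset.sum_mul, Finset.mul_sum]
        exact Finset.sum_congr rfl fun j _ => by ring
    _ = ∑ j ∈ s, ∑ x : ι → A, (s.card : ℝ)⁻¹ *
        (u x * (p j (x i) * ∏ k ∈ Finset.univ.erase i, r k (x k))) :=
        Finset.sum_comm
    _ = _ := by
        rw [Finset.mul_sum]
        exact Finset.sum_congr rfl fun j _ => by rw [Finset.mul_sum]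

lemma swapStrat_apply_left {i j : ι} (hij : i ≠ j) (y : ι → A) :
    swapStrat y i j i = y j := by
  simp [swapStrat, Function.update_of_ne hij]

lemma swapStrat_apply_right {i j : ι} (y : ι → A) :
    swapStrat y i j j = y i := by
  simp [swapStrat]

lemma swapStrat_apply_other {i j k : ι} (hki : k ≠ i) (hkj : k ≠ j) (y : ι → A) :
    swapStrat y i j k = y k := by
  simp [swapStrat, Function.update_of_ne hki, Function.update_of_ne hkj]

lemma swapStrat_involutive (i j : ι) :
    Function.Involutive (fun y : ι → A => swapStrat y i j) := by
  intro y
  funext k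
  show swapStrat (swapStrat y i j) i j k = y k
  by_cases hij : i = j
  · subst hij
    by_cases hk : k = i
    · subst hk; simp [swapStrat]
    · rw [swapStrat_apply_other hk hk, swapStrat_apply_other hk hk]
  · by_cases hk : k = i
    · subst hk
      rw [swapStrat_apply_left hij, swapStrat_apply_right]
    · by_cases hk2 : k = j
      · subst hk2
        rw [swapStrat_apply_right, swapStrat_apply_left hij]
      · rw [swapStrat_apply_other hk hk2, swapStrat_apply_other hk hk2]

lemma U_update_swap (Y : ι → Finset A) (u : (ι → A) → ℝ) (cls : ι → κ)
    (hpi : PermInvariant Y u cls) (r : ι → A → ℝ)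
    (hr : ∀ k, r k ∈ simplex (Y k)) (hrc : ∀ i j, cls i = cls j → r i = r j)
    {i j : ι} (hij : cls i = cls j) (pj : A → ℝ) (hpj : pj ∈ simplex (Y i)) :
    U u (Function.update r i pj) = U u (Function.update r j pj) := by
  by_cases hij' : i = j
  · rw [hij']
  have hYij : Y i = Y j := (hpi i j hij).1
  have hrij : r i = r j := hrc i j hij
  unfold U
  refine Fintype.sum_bijective (fun y : ι → A => swapStrat y i j)
    ((swapStrat_involutive i j).bijective) _ _ fun x => ?_
  show u x * ∏ k, Function.update r i pj k (x k)
      = u (swapStrat x i j) * ∏ k, Function.update r j pj k (swapStrat x i j k)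
  by_cases hx : ∀ k, x k ∈ Y k
  · have hu : u (swapStrat x i j) = u x := (hpi i j hij).2 x hx
    rw [hu]
    congr 1
    rw [prod_update_apply, prod_update_apply, swapStrat_apply_right]
    have hji : j ∈ Finset.univ.erase i :=
      Finset.mem_erase.mpr ⟨fun h => hij' h.symm, Finset.mem_univ j⟩
    have hij2 : i ∈ Finset.univ.erase j :=
      Finset.mem_erase.mpr ⟨hij', Finset.mem_univ i⟩
    rw [← Finset.mul_prod_erase _ (fun k => r k (x k)) hji,
      ← Finset.mul_prod_erase _ (fun k => r k (swapStrat x i j k)) hij2,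
      Finset.erase_right_comm (a := j) (b := i)]
    have h2 : ∏ k ∈ (Finset.univ.erase i).erase j, r k (swapStrat x i j k)
        = ∏ k ∈ (Finset.univ.erase i).erase j, r k (x k) := by
      refine Finset.prod_congr rfl fun k hk => ?_
      rw [swapStrat_apply_other (Finset.ne_of_mem_erase (Finset.mem_of_mem_erase hk))
        (Finset.ne_of_mem_erase hk)]
    rw [h2, swapStrat_apply_left hij', hrij]
  · push_neg at hx
    obtain ⟨k, hk⟩ := hx
    have hL : ∏ l, Function.update r i pj l (x l) = 0 := by
      refine Finset.prod_eq_zero (Finset.mem_univ k) ?_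
      by_cases hki : k = i
      · rw [hki, Function.update_self]
        exact hpj.2.1 _ (hki ▸ hk)
      · rw [Function.update_of_ne hki]
        exact (hr k).2.1 _ hk
    have hR : ∏ l, Function.update r j pj l (swapStrat x i j l) = 0 := by
      by_cases hki : k = i
      · refine Finset.prod_eq_zero (Finset.mem_univ j) ?_
        rw [Function.update_self, swapStrat_apply_right]
        exact hpj.2.1 _ (hki ▸ hk)
      · by_cases hkj : k = j
        · refine Finset.prod_eq_zero (Finset.mem_univ i) ?_
          rw [Function.update_of_ne hij', swapStrat_apply_left hij', hrij]
          exact (hr j).2.1 _ (hkj ▸ hk)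
        · refine Finset.prod_eq_zero (Finset.mem_univ k) ?_
          rw [Function.update_of_ne hkj, swapStrat_apply_other hki hkj]
          exact (hr k).2.1 _ hk
    rw [hL, hR, mul_zero, mul_zero]

/-- **Lemma 2.** If `p ∈ BR^ε(q̄)` then the centroid distribution `p̄` also satisfies
`p̄ ∈ BR^ε(q̄)`. -/
theorem centroid_mem_BR
    (Y : ι → Finset A) (hY : ∀ i, (Y i).Nonempty) (u : (ι → A) → ℝ)
    (cls : ι → κ) (hpi : PermInvariant Y u cls)
    (ε : ℝ) (hε : 0 ≤ ε) (q p : ι → A → ℝ) (hq : q ∈ Delta Y)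
    (hp : p ∈ BR Y u ε (centroid cls q)) :
    centroid cls p ∈ BR Y u ε (centroid cls q) := by
  set r := centroid cls q with hr_def
  have hrmem : ∀ k, r k ∈ simplex (Y k) := by
    intro k
    refine centroid_mem_simplex cls q (Y k) k fun j hj => ?_
    have hcls : cls j = cls k := cls_of_mem_cluster hj
    have hYjk : Y j = Y k := (hpi j k hcls).1
    rw [← hYjk]; exact hq j
  have hrc : ∀ i j, cls i = cls j → r i = r j := fun i j h =>
    centroid_eq_of_cls_eq cls q h
  intro i
  have hpisim : ∀ j ∈ cluster cls i, p j ∈ simplex (Y i) := by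
    intro j hj
    have hcls : cls j = cls i := cls_of_mem_cluster hj
    have hYji : Y j = Y i := (hpi j i hcls).1
    rw [← hYji]; exact (hp j).1
  refine ⟨centroid_mem_simplex cls p (Y i) i hpisim, ?_⟩
  intro qi hqi
  have hcent : centroid cls p i = ((cluster cls i).card : ℝ)⁻¹ •
      ∑ j ∈ cluster cls i, p j := rfl
  rw [hcent, U_update_centroid]
  have hcpos : (0 : ℝ) < ((cluster cls i).card : ℝ) := by
    exact_mod_cast cluster_card_pos cls i
  have key : ∀ j ∈ cluster cls i,
      U u (Function.update r i qi) - ε ≤ U u (Function.update r i (p j)) := by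
    intro j hj
    have hcls : cls j = cls i := cls_of_mem_cluster hj
    have hYji : Y j = Y i := (hpi j i hcls).1
    have e1 : U u (Function.update r i (p j)) = U u (Function.update r j (p j)) :=
      U_update_swap Y u cls hpi r hrmem hrc hcls.symm (p j) (hpisim j hj)
    have e2 : U u (Function.update r i qi) = U u (Function.update r j qi) :=
      U_update_swap Y u cls hpi r hrmem hrc hcls.symm qi hqi
    rw [e1, e2]
    exact (hp j).2 qi (by rw [hYji]; exact hqi)
  have hsum : ((cluster cls i).card : ℝ) * (U u (Function.update r i qi) - ε)
      ≤ ∑ j ∈ cluster cls i, U u (Function.update r i (p j)) := by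
    calc ((cluster cls i).card : ℝ) * (U u (Function.update r i qi) - ε)
        = ∑ _j ∈ cluster cls i, (U u (Function.update r i qi) - ε) := by
          rw [Finset.sum_const, nsmul_eq_mul]
      _ ≤ _ := Finset.sum_le_sum key
  have := mul_le_mul_of_nonneg_left hsum (le_of_lt (inv_pos.mpr hcpos))
  calc U u (Function.update r i qi) - ε
      = ((cluster cls i).card : ℝ)⁻¹ * (((cluster cls i).card : ℝ) *
        (U u (Function.update r i qi) - ε)) := by
        rw [← mul_assoc, inv_mul_cancel₀ hcpos.ne', one_mul]
    _ ≤ _ := this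

end ECFP
end
end

section
/- Let C be a permutation-invariant partition of the player set of a finite normal-form game with identical interests. If p ∈ Δ^n is a mean-centric equilibrium, then its centroid distribution p̄ is a symmetric Nash equilibrium: p ∈ MCE implies p̄ ∈ SNE. -/
open MeasureTheory Filter Topology

noncomputable section

namespace ECFP

variable {ι A κ : Type*}

variable [Fintype ι] [DecidableEq ι] [Fintype A] [DecidableEq κ]

variable [Nonempty ι]

lemma U_update_eq (u : (ι → A) → ℝ) (p : ι → A → ℝ) (i : ι) (v : A → ℝ) :
    U u (Function.update p i v) =
      ∑ y : ι → A, u y * (v (y i) * ∏ k ∈ Finset.univ.erase i, p k (y k)) := by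
  unfold U
  refine Finset.sum_congr rfl fun y _ => ?_
  congr 1
  have h : (fun k => (Function.update p i v) k (y k)) =
      Function.update (fun k => p k (y k)) i (v (y i)) := by
    funext k
    rcases eq_or_ne k i with rfl | h
    · simp
    · simp [Function.update_of_ne h]
  rw [h, Finset.prod_update_of_mem (Finset.mem_univ i)]
  rw [Finset.sdiff_singleton_eq_erase]

lemma U_update_smul_sum (u : (ι → A) → ℝ) (p : ι → A → ℝ) (i : ι) (c : ℝ)
    (s : Finset ι) (f : ι → A → ℝ) :
    U u (Function.update p i (c • ∑ j ∈ s, f j)) =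
      c * ∑ j ∈ s, U u (Function.update p i (f j)) := by
  simp only [U_update_eq]
  rw [Finset.mul_sum]
  rw [show (∑ y : ι → A, u y * ((c • ∑ j ∈ s, f j) (y i) *
      ∏ k ∈ Finset.univ.erase i, p k (y k))) =
      ∑ y : ι → A, ∑ j ∈ s, c * (u y * (f j (y i) *
        ∏ k ∈ Finset.univ.erase i, p k (y k))) from ?_]
  · rw [Finset.sum_comm]
    refine Finset.sum_congr rfl fun j _ => ?_
    rw [← Finset.mul_sum]
  · refine Finset.sum_congr rfl fun y _ => ?_
    simp only [Pi.smul_apply, Finset.sum_apply, smul_eq_mul, Finset.mul_sum,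
      Finset.sum_mul]
    refine Finset.sum_congr rfl fun j _ => by ring

lemma swapStrat_eq_comp {B : Type*} (y : ι → B) (i j : ι) :
    swapStrat y i j = y ∘ (Equiv.swap i j) := by
  funext k
  rcases eq_or_ne k j with rfl | hkj
  · simp [swapStrat, Equiv.swap_apply_right]
  · rcases eq_or_ne k i with rfl | hki
    · simp [swapStrat, Function.update_of_ne hkj, Equiv.swap_apply_left]
    · simp [swapStrat, Function.update_of_ne hkj, Function.update_of_ne hki,
        Equiv.swap_apply_of_ne_of_ne hki hkj]

lemma U_swap (Y : ι → Finset A) (u : (ι → A) → ℝ) (cls : ι → κ)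
    (hpi : PermInvariant Y u cls) (i j : ι) (hij : cls i = cls j)
    (P : ι → A → ℝ) (hP : ∀ k a, a ∉ Y k → P k a = 0) :
    U u (swapStrat P i j) = U u P := by
  have hYij : Y i = Y j := (hpi i j hij).1
  unfold U
  rw [← Equiv.sum_comp (Equiv.arrowCongr (Equiv.swap i j) (Equiv.refl A))
      (fun y => u y * ∏ k, P k (y k))]
  refine Finset.sum_congr rfl fun y _ => ?_
  have hey : (Equiv.arrowCongr (Equiv.swap i j) (Equiv.refl A)) y = swapStrat y i j := by
    rw [swapStrat_eq_comp]
    funext k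
    simp [Equiv.arrowCongr]
  rw [hey]
  have hprod : ∏ k, P k (swapStrat y i j k) = ∏ k, (swapStrat P i j) k (y k) := by
    rw [← Equiv.prod_comp (Equiv.swap i j) (fun k => (swapStrat P i j) k (y k))]
    refine Finset.prod_congr rfl fun k _ => ?_
    simp [swapStrat_eq_comp, Equiv.swap_apply_self]
  rw [hprod]
  by_cases hsupp : ∀ k, y k ∈ Y k
  · rw [(hpi i j hij).2 y hsupp]
  · push_neg at hsupp
    obtain ⟨k₀, hk₀⟩ := hsupp
    have hz : ∏ k, (swapStrat P i j) k (y k) = 0 := by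
      refine Finset.prod_eq_zero (Finset.mem_univ k₀) ?_
      have h1 : (swapStrat P i j) k₀ = P (Equiv.swap i j k₀) := by
        rw [swapStrat_eq_comp]; rfl
      have h2 : Y (Equiv.swap i j k₀) = Y k₀ := by
        rcases eq_or_ne k₀ i with h | hki
        · rw [h, Equiv.swap_apply_left]
          exact hYij.symm
        · rcases eq_or_ne k₀ j with h | hkj
          · rw [h, Equiv.swap_apply_right]
            exact hYij
          · rw [Equiv.swap_apply_of_ne_of_ne hki hkj]
      rw [h1]
      exact hP _ _ (h2 ▸ hk₀)
    rw [hz, mul_zero, mul_zero]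

lemma swapStrat_update {B : Type*} (P : ι → B) (i j : ι) (hPij : P i = P j) (v : B) :
    swapStrat (Function.update P i v) i j = Function.update P j v := by
  funext k
  simp only [swapStrat, Function.update_apply]
  split_ifs <;> simp_all

lemma cluster_congr (cls : ι → κ) {i j : ι} (hij : cls i = cls j) :
    cluster cls i = cluster cls j := by
  unfold cluster
  rw [hij]

lemma centroid_classConst (cls : ι → κ) (p : ι → A → ℝ) :
    classConst cls (centroid cls p) := by
  intro i j hij
  unfold centroid
  rw [cluster_congr cls hij]

lemma centroid_apply (cls : ι → κ) (p : ι → A → ℝ) (i : ι) (a : A) :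
    centroid cls p i a =
      ((cluster cls i).card : ℝ)⁻¹ * ∑ j ∈ cluster cls i, p j a := by
  simp [centroid, Finset.sum_apply]

lemma centroid_mem_Delta (Y : ι → Finset A) (u : (ι → A) → ℝ) (cls : ι → κ)
    (hpi : PermInvariant Y u cls) (p : ι → A → ℝ) (hp : p ∈ Delta Y) :
    centroid cls p ∈ Delta Y := by
  intro i
  have hmem := mem_cluster_self cls i
  have hcard : (0 : ℝ) < ((cluster cls i).card : ℝ) := by
    exact_mod_cast Finset.card_pos.mpr ⟨i, hmem⟩
  have hY : ∀ j ∈ cluster cls i, Y j = Y i := by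
    intro j hj
    exact (hpi j i (Finset.mem_filter.mp hj).2).1
  refine ⟨fun a => ?_, fun a ha => ?_, ?_⟩
  · rw [centroid_apply]
    have : (0 : ℝ) ≤ ∑ j ∈ cluster cls i, p j a :=
      Finset.sum_nonneg fun j _ => (hp j).1 a
    positivity
  · rw [centroid_apply]
    have : ∑ j ∈ cluster cls i, p j a = 0 :=
      Finset.sum_eq_zero fun j hj => (hp j).2.1 a (by rw [hY j hj]; exact ha)
    rw [this, mul_zero]
  · simp only [centroid_apply]
    rw [← Finset.mul_sum, Finset.sum_comm]
    have : ∀ j ∈ cluster cls i, ∑ a ∈ Y i, p j a = 1 := by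
      intro j hj
      rw [← hY j hj]
      exact (hp j).2.2
    rw [Finset.sum_congr rfl this, Finset.sum_const, nsmul_eq_mul, mul_one,
      inv_mul_cancel₀ hcard.ne']

/-- If `p` is a mean-centric equilibrium then its centroid distribution `p̄` is a
symmetric Nash equilibrium. -/
theorem centroid_of_MCE_mem_SNE
    (Y : ι → Finset A) (hY : ∀ i, (Y i).Nonempty) (u : (ι → A) → ℝ)
    (cls : ι → κ) (hpi : PermInvariant Y u cls)
    (p : ι → A → ℝ) (hp : p ∈ MCE Y u cls) :
    centroid cls p ∈ SNE Y u cls := by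
  obtain ⟨hpΔ, hmce⟩ := hp
  set pbar := centroid cls p with hpbar
  have hpbarΔ : pbar ∈ Delta Y := centroid_mem_Delta Y u cls hpi p hpΔ
  have hsupp : ∀ k a, a ∉ Y k → pbar k a = 0 := fun k a ha => (hpbarΔ k).2.1 a ha
  refine ⟨⟨hpbarΔ, ?_⟩, centroid_classConst cls p⟩
  intro i qi hqi
  have hmemi := mem_cluster_self cls i
  have hcard : (0 : ℝ) < ((cluster cls i).card : ℝ) := by
    exact_mod_cast Finset.card_pos.mpr ⟨i, hmemi⟩
  -- key pointwise bound
  have key : ∀ j ∈ cluster cls i,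
      U u (Function.update pbar i qi) ≤ U u (Function.update pbar i (p j)) := by
    intro j hj
    have hji : cls j = cls i := (Finset.mem_filter.mp hj).2
    have hYij : Y i = Y j := (hpi i j hji.symm).1
    have hPij : pbar i = pbar j := centroid_classConst cls p i j hji.symm
    have hqi' : qi ∈ simplex (Y j) := hYij ▸ hqi
    have hs1 : ∀ k a, a ∉ Y k → (Function.update pbar i qi) k a = 0 := by
      intro k a ha
      rcases eq_or_ne k i with rfl | hk
      · rw [Function.update_self]; exact hqi.2.1 a ha
      · rw [Function.update_of_ne hk]; exact hsupp k a ha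
    have hs2 : ∀ k a, a ∉ Y k → (Function.update pbar i (p j)) k a = 0 := by
      intro k a ha
      rcases eq_or_ne k i with rfl | hk
      · rw [Function.update_self]; exact (hpΔ j).2.1 a (by rw [← hYij]; exact ha)
      · rw [Function.update_of_ne hk]; exact hsupp k a ha
    have h1 : U u (Function.update pbar j qi) = U u (Function.update pbar i qi) := by
      rw [← swapStrat_update pbar i j hPij qi]
      exact U_swap Y u cls hpi i j hji.symm _ hs1
    have h2 : U u (Function.update pbar j (p j)) = U u (Function.update pbar i (p j)) := by
      rw [← swapStrat_update pbar i j hPij (p j)]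
      exact U_swap Y u cls hpi i j hji.symm _ hs2
    have h3 := hmce j qi hqi'
    linarith
  have hsum := Finset.sum_le_sum key
  have hlin : U u pbar =
      ((cluster cls i).card : ℝ)⁻¹ *
        ∑ j ∈ cluster cls i, U u (Function.update pbar i (p j)) := by
    conv_lhs => rw [← Function.update_eq_self i pbar]
    have : pbar i = ((cluster cls i).card : ℝ)⁻¹ • ∑ j ∈ cluster cls i, p j := rfl
    rw [this, U_update_smul_sum]
  have hconst : ∑ j ∈ cluster cls i, U u (Function.update pbar i qi) =
      ((cluster cls i).card : ℝ) * U u (Function.update pbar i qi) := by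
    rw [Finset.sum_const, nsmul_eq_mul]
  calc U u (Function.update pbar i qi)
      = ((cluster cls i).card : ℝ)⁻¹ *
          (((cluster cls i).card : ℝ) * U u (Function.update pbar i qi)) := by
        rw [← mul_assoc, inv_mul_cancel₀ hcard.ne', one_mul]
    _ ≤ ((cluster cls i).card : ℝ)⁻¹ *
          ∑ j ∈ cluster cls i, U u (Function.update pbar i (p j)) := by
        rw [← hconst]
        exact mul_le_mul_of_nonneg_left hsum (by positivity)
    _ = U u pbar := hlin.symm

end ECFP
end
end

section
/- Let C be a permutation-invariant partition of the player set of a finite normal-form game with identical interests, and let q̄^c : [0,∞) → Δ^n be a solution of the centroid CT-ECFP differential inclusion ẏ ∈ BR(y) − y taking values in the set of centroid (class-constant) distributions. Then for any nondegenerate interval T ⊆ [0,∞), the function t ↦ U(q̄^c(t)) is constant on T if and only if q̄^c(t) ∈ SNE for every t ∈ T. -/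
open MeasureTheory Filter Topology

noncomputable section

namespace ECFP

variable {ι A κ : Type*}

variable [Fintype ι] [DecidableEq ι] [Fintype A] [DecidableEq κ]

variable [Nonempty ι]


section AuxAnalysis
open Set

lemma fubini_tri {f' h' : ℝ → ℝ} {s t : ℝ}
    (hf' : IntegrableOn f' (Ioc s t)) (hh' : IntegrableOn h' (Ioc s t)) :
    (∫ r in Ioc s t, f' r * ∫ v in Ioc s t ∩ Iic r, h' v)
      + (∫ v in Ioc s t, (∫ r in Ioc s t ∩ Iic v, f' r) * h' v)
    = (∫ r in Ioc s t, f' r) * (∫ v in Ioc s t, h' v) := by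
  set I : Set ℝ := Ioc s t with hI
  set μ : Measure ℝ := volume.restrict I with hμ
  have hS1 : MeasurableSet {z : ℝ × ℝ | z.2 ≤ z.1} :=
    (isClosed_le continuous_snd continuous_fst).measurableSet
  have hK : Integrable (fun z : ℝ × ℝ => f' z.1 * h' z.2) (μ.prod μ) := hf'.mul_prod hh'
  have hK1 : Integrable ({z : ℝ × ℝ | z.2 ≤ z.1}.indicator
      (fun z : ℝ × ℝ => f' z.1 * h' z.2)) (μ.prod μ) := hK.indicator hS1
  have hK2fun : Integrable (fun z : ℝ × ℝ => f' z.2 * h' z.1) (μ.prod μ) :=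
    (hh'.mul_prod hf').congr (Filter.Eventually.of_forall fun z => mul_comm _ _)
  have hK2' : Integrable ({z : ℝ × ℝ | z.2 ≤ z.1}.indicator
      (fun z : ℝ × ℝ => f' z.2 * h' z.1)) (μ.prod μ) := hK2fun.indicator hS1
  have hK2 : Integrable ({z : ℝ × ℝ | z.1 ≤ z.2}.indicator
      (fun z : ℝ × ℝ => f' z.1 * h' z.2)) (μ.prod μ) :=
    hK.indicator (isClosed_le continuous_fst continuous_snd).measurableSet
  -- first double integral
  have e1 : ∫ z, ({z : ℝ × ℝ | z.2 ≤ z.1}.indicator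
      (fun z : ℝ × ℝ => f' z.1 * h' z.2)) z ∂(μ.prod μ)
      = ∫ r in I, f' r * ∫ v in I ∩ Iic r, h' v := by
    rw [MeasureTheory.integral_prod _ hK1]
    refine integral_congr_ae (Filter.Eventually.of_forall fun r => ?_)
    have step1 : ∫ v, ({z : ℝ × ℝ | z.2 ≤ z.1}.indicator
        (fun z : ℝ × ℝ => f' z.1 * h' z.2)) (r, v) ∂μ
        = ∫ v, (Iic r).indicator (fun v => f' r * h' v) v ∂μ := by
      refine integral_congr_ae (Filter.Eventually.of_forall fun v => ?_)
      by_cases hv : v ≤ r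
      · simp [Set.indicator_apply, Set.mem_setOf_eq, Set.mem_Iic, hv]
      · simp [Set.indicator_apply, Set.mem_setOf_eq, Set.mem_Iic, hv]
    show ∫ v, ({z : ℝ × ℝ | z.2 ≤ z.1}.indicator
        (fun z : ℝ × ℝ => f' z.1 * h' z.2)) (r, v) ∂μ = _
    rw [step1, hμ, setIntegral_indicator measurableSet_Iic]
    exact integral_const_mul _ _
  -- second double integral, by swapping
  have e2 : ∫ z, ({z : ℝ × ℝ | z.1 ≤ z.2}.indicator
      (fun z : ℝ × ℝ => f' z.1 * h' z.2)) z ∂(μ.prod μ)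
      = ∫ v in I, (∫ r in I ∩ Iic v, f' r) * h' v := by
    rw [← MeasureTheory.integral_prod_swap]
    have hswap : (fun z : ℝ × ℝ => ({z : ℝ × ℝ | z.1 ≤ z.2}.indicator
        (fun z : ℝ × ℝ => f' z.1 * h' z.2)) z.swap)
        = ({z : ℝ × ℝ | z.2 ≤ z.1}.indicator
        (fun z : ℝ × ℝ => f' z.2 * h' z.1)) := by
      funext z
      rcases le_or_gt z.2 z.1 with h | h
      · simp [Set.indicator_apply, Set.mem_setOf_eq, Prod.swap, h]
      · simp [Set.indicator_apply, Set.mem_setOf_eq, Prod.swap, h.not_ge]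
    rw [hswap, MeasureTheory.integral_prod _ hK2']
    refine integral_congr_ae (Filter.Eventually.of_forall fun v => ?_)
    have step1 : ∫ r, ({z : ℝ × ℝ | z.2 ≤ z.1}.indicator
        (fun z : ℝ × ℝ => f' z.2 * h' z.1)) (v, r) ∂μ
        = ∫ r, (Iic v).indicator (fun r => f' r * h' v) r ∂μ := by
      refine integral_congr_ae (Filter.Eventually.of_forall fun r => ?_)
      by_cases hr : r ≤ v
      · simp [Set.indicator_apply, Set.mem_setOf_eq, Set.mem_Iic, hr, mul_comm]
      · simp [Set.indicator_apply, Set.mem_setOf_eq, Set.mem_Iic, hr]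
    show ∫ r, ({z : ℝ × ℝ | z.2 ≤ z.1}.indicator
        (fun z : ℝ × ℝ => f' z.2 * h' z.1)) (v, r) ∂μ = _
    rw [step1, hμ, setIntegral_indicator measurableSet_Iic]
    exact integral_mul_const _ _
  -- diagonal is null
  have hdiagmeas : MeasurableSet {z : ℝ × ℝ | z.1 = z.2} :=
    (isClosed_eq continuous_fst continuous_snd).measurableSet
  have hdiag : (μ.prod μ) {z : ℝ × ℝ | z.1 = z.2} = 0 := by
    rw [Measure.prod_apply hdiagmeas]
    have hnull : ∀ r : ℝ, μ (Prod.mk r ⁻¹' {z : ℝ × ℝ | z.1 = z.2}) = 0 := by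
      intro r
      have hpre : (Prod.mk r ⁻¹' {z : ℝ × ℝ | z.1 = z.2}) = {r} := by
        ext v; simp [eq_comm]
      rw [hpre, hμ, Measure.restrict_apply (MeasurableSet.singleton r)]
      exact measure_mono_null Set.inter_subset_left (measure_singleton r)
    simp [hnull]
  have e3 : ∫ z, ({z : ℝ × ℝ | z.1 = z.2}.indicator
      (fun z : ℝ × ℝ => f' z.1 * h' z.2)) z ∂(μ.prod μ) = 0 := by
    rw [integral_indicator hdiagmeas, Measure.restrict_eq_zero.mpr hdiag, integral_zero_measure]
  have key : ∫ z, (({z : ℝ × ℝ | z.2 ≤ z.1}.indicator (fun z : ℝ × ℝ => f' z.1 * h' z.2)) z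
      + ({z : ℝ × ℝ | z.1 ≤ z.2}.indicator (fun z : ℝ × ℝ => f' z.1 * h' z.2)) z) ∂(μ.prod μ)
      = ∫ z, ((fun z : ℝ × ℝ => f' z.1 * h' z.2) z
      + ({z : ℝ × ℝ | z.1 = z.2}.indicator (fun z : ℝ × ℝ => f' z.1 * h' z.2)) z) ∂(μ.prod μ) := by
    refine integral_congr_ae (Filter.Eventually.of_forall fun z => ?_)
    rcases lt_trichotomy z.1 z.2 with h | h | h
    · simp [Set.indicator_apply, Set.mem_setOf_eq, h.le, h.not_ge, h.ne]
    · simp [Set.indicator_apply, Set.mem_setOf_eq, h, le_of_eq h]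
    · simp [Set.indicator_apply, Set.mem_setOf_eq, h.le, h.not_ge, h.ne']
  rw [integral_add hK1 hK2, integral_add hK (hK.indicator hdiagmeas), e1, e2, e3,
    MeasureTheory.integral_prod_mul] at key
  simpa using key

lemma ibp_aux {f h f' h' : ℝ → ℝ} {s t : ℝ} (hst : s ≤ t)
    (hf' : IntegrableOn f' (Ioc s t)) (hh' : IntegrableOn h' (Ioc s t))
    (hf : ∀ v ∈ Icc s t, f v = f s + ∫ r in Ioc s v, f' r)
    (hh : ∀ v ∈ Icc s t, h v = h s + ∫ r in Ioc s v, h' r) :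
    f t * h t = f s * h s + ∫ r in Ioc s t, (f' r * h r + f r * h' r) := by
  set I : Set ℝ := Ioc s t with hI
  set P : ℝ → ℝ := fun r => ∫ v in I ∩ Iic r, h' v with hP
  set Q : ℝ → ℝ := fun r => ∫ v in I ∩ Iic r, f' v with hQ
  have hcap : ∀ r ∈ Icc s t, Ioc s r = I ∩ Iic r := by
    intro r hr
    ext v
    simp only [hI, Set.mem_Ioc, Set.mem_inter_iff, Set.mem_Iic]
    exact ⟨fun hv => ⟨⟨hv.1, hv.2.trans hr.2⟩, hv.2⟩, fun hv => ⟨hv.1.1, hv.2⟩⟩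
  -- continuity of the primitives on Icc s t
  have hh'Icc : IntegrableOn h' (Icc s t) := by
    rwa [integrableOn_Icc_iff_integrableOn_Ioc]
  have hf'Icc : IntegrableOn f' (Icc s t) := by
    rwa [integrableOn_Icc_iff_integrableOn_Ioc]
  have hPc : ContinuousOn P (Icc s t) :=
    (intervalIntegral.continuousOn_primitive hh'Icc).congr fun r hr => by
      show (∫ v in I ∩ Iic r, h' v) = _
      rw [← hcap r hr]
  have hQc : ContinuousOn Q (Icc s t) :=
    (intervalIntegral.continuousOn_primitive hf'Icc).congr fun r hr => by
      show (∫ v in I ∩ Iic r, f' v) = _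
      rw [← hcap r hr]
  have hPm : AEStronglyMeasurable P (volume.restrict I) :=
    (hPc.aestronglyMeasurable measurableSet_Icc).mono_measure
      (Measure.restrict_mono Set.Ioc_subset_Icc_self le_rfl)
  have hQm : AEStronglyMeasurable Q (volume.restrict I) :=
    (hQc.aestronglyMeasurable measurableSet_Icc).mono_measure
      (Measure.restrict_mono Set.Ioc_subset_Icc_self le_rfl)
  -- bounds on the primitives
  have hPb : ∃ C, ∀ r, ‖P r‖ ≤ C := by
    refine ⟨∫ v in I, ‖h' v‖, fun r => ?_⟩
    calc ‖P r‖ ≤ ∫ v in I ∩ Iic r, ‖h' v‖ := norm_integral_le_integral_norm _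
    _ ≤ ∫ v in I, ‖h' v‖ := by
        apply setIntegral_mono_set hh'.norm
        · exact Filter.Eventually.of_forall fun v => norm_nonneg _
        · exact HasSubset.Subset.eventuallyLE Set.inter_subset_left
  have hQb : ∃ C, ∀ r, ‖Q r‖ ≤ C := by
    refine ⟨∫ v in I, ‖f' v‖, fun r => ?_⟩
    calc ‖Q r‖ ≤ ∫ v in I ∩ Iic r, ‖f' v‖ := norm_integral_le_integral_norm _
    _ ≤ ∫ v in I, ‖f' v‖ := by
        apply setIntegral_mono_set hf'.norm
        · exact Filter.Eventually.of_forall fun v => norm_nonneg _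
        · exact HasSubset.Subset.eventuallyLE Set.inter_subset_left
  -- integrabilities
  have i1 : IntegrableOn (fun r => f' r * h s) I := hf'.mul_const _
  have i2 : IntegrableOn (fun r => f' r * P r) I :=
    (hf'.bdd_mul (c := hPb.choose) hPm (Filter.Eventually.of_forall hPb.choose_spec)).congr (Filter.Eventually.of_forall fun r => mul_comm _ _)
  have i3 : IntegrableOn (fun r => f s * h' r) I := hh'.const_mul _
  have i4 : IntegrableOn (fun r => Q r * h' r) I := by obtain ⟨C, hC⟩ := hQb; exact hh'.bdd_mul (c := C) hQm (Filter.Eventually.of_forall hC)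
  -- rewrite the integrand on I
  have congr1 : ∫ r in I, (f' r * h r + f r * h' r)
      = ∫ r in I, ((f' r * h s + f' r * P r) + (f s * h' r + Q r * h' r)) := by
    refine setIntegral_congr_fun measurableSet_Ioc fun r hr => ?_
    have hrIcc : r ∈ Icc s t := Set.Ioc_subset_Icc_self hr
    rw [hf r hrIcc, hh r hrIcc, hcap r hrIcc]
    show f' r * (h s + P r) + (f s + Q r) * h' r = _
    ring
  have hFt : f t = f s + ∫ r in I, f' r := hf t ⟨hst, le_rfl⟩
  have hHt : h t = h s + ∫ r in I, h' r := hh t ⟨hst, le_rfl⟩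
  have split : ∫ r in I, ((f' r * h s + f' r * P r) + (f s * h' r + Q r * h' r))
      = ((∫ r in I, f' r * h s) + ∫ r in I, f' r * P r)
        + ((∫ r in I, f s * h' r) + ∫ r in I, Q r * h' r) := by
    have i12 : IntegrableOn (fun r => f' r * h s + f' r * P r) I := i1.add i2
    have i34 : IntegrableOn (fun r => f s * h' r + Q r * h' r) I := i3.add i4
    rw [integral_add i12 i34, integral_add i1 i2, integral_add i3 i4]
  have hfub := fubini_tri hf' hh'
  rw [congr1, split, integral_mul_const, integral_const_mul]
  have : (∫ r in I, f' r * P r) + (∫ r in I, Q r * h' r)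
      = (∫ r in I, f' r) * (∫ v in I, h' v) := hfub
  rw [hFt, hHt]
  nlinarith [this]

lemma prod_rule {n : Type*} [DecidableEq n] (S : Finset n) (f f' : n → ℝ → ℝ) {s t : ℝ}
    (hint : ∀ i ∈ S, IntegrableOn (f' i) (Ioc s t))
    (hbd : ∀ i ∈ S, ∀ v ∈ Icc s t, |f i v| ≤ 1)
    (hrep : ∀ i ∈ S, ∀ v ∈ Icc s t, f i v = f i s + ∫ r in Ioc s v, f' i r) :
    ∀ v ∈ Icc s t, (∏ i ∈ S, f i v) = (∏ i ∈ S, f i s)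
      + ∫ r in Ioc s v, ∑ i ∈ S, f' i r * ∏ j ∈ S.erase i, f j r := by
  induction S using Finset.induction_on with
  | empty => intro v hv; simp
  | @insert a S ha IH =>
    intro v hv
    have hmem : ∀ i ∈ S, i ∈ insert a S := fun i hi => Finset.mem_insert_of_mem hi
    have hamem : a ∈ insert a S := Finset.mem_insert_self a S
    have IH' := IH (fun i hi => hint i (hmem i hi)) (fun i hi => hbd i (hmem i hi))
      (fun i hi => hrep i (hmem i hi))
    -- continuity of each factor on Icc s t
    have hfc : ∀ i ∈ insert a S, ContinuousOn (f i) (Icc s t) := by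
      intro i hi
      have hc : ContinuousOn (fun w => f i s + ∫ r in Ioc s w, f' i r) (Icc s t) :=
        continuousOn_const.add (intervalIntegral.continuousOn_primitive
          ((integrableOn_Icc_iff_integrableOn_Ioc).mpr (hint i hi)))
      exact hc.congr fun w hw => hrep i hi w hw
    have hsubIoc : Ioc s v ⊆ Ioc s t := Set.Ioc_subset_Ioc le_rfl hv.2
    have hsubIcc : Icc s v ⊆ Icc s t := Set.Icc_subset_Icc le_rfl hv.2
    -- integrability of the derivative of the product over S, on Ioc s v
    have hD : IntegrableOn (fun r => ∑ i ∈ S, f' i r * ∏ j ∈ S.erase i, f j r) (Ioc s v) := by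
      apply MeasureTheory.integrable_finset_sum
      intro i hi
      have hprodc : ContinuousOn (fun r => ∏ j ∈ S.erase i, f j r) (Icc s t) := by
        apply continuousOn_finset_prod
        intro j hj
        exact hfc j (hmem j (Finset.mem_of_mem_erase hj))
      have hm : AEStronglyMeasurable (fun r => ∏ j ∈ S.erase i, f j r)
          (volume.restrict (Ioc s v)) :=
        (hprodc.aestronglyMeasurable measurableSet_Icc).mono_measure
          (Measure.restrict_mono (hsubIoc.trans Set.Ioc_subset_Icc_self) le_rfl)
      have hbnd : ∀ᵐ r ∂(volume.restrict (Ioc s v)),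
          ‖∏ j ∈ S.erase i, f j r‖ ≤ 1 := by
        filter_upwards [ae_restrict_mem measurableSet_Ioc] with r hr
        rw [Real.norm_eq_abs, Finset.abs_prod]
        refine Finset.prod_le_one (fun j _ => abs_nonneg _) fun j hj => ?_
        exact hbd j (hmem j (Finset.mem_of_mem_erase hj))
          r (Set.Ioc_subset_Icc_self (hsubIoc hr))
      have := MeasureTheory.Integrable.bdd_mul ((hint i (hmem i hi)).mono_set hsubIoc)
        hm hbnd
      exact this.congr (Filter.Eventually.of_forall fun r => mul_comm _ _)
    -- apply integration by parts
    have hibp := ibp_aux hv.1 ((hint a hamem).mono_set hsubIoc) hD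
      (fun w hw => hrep a hamem w (hsubIcc hw))
      (fun w hw => IH' w (hsubIcc hw))
    rw [Finset.prod_insert ha, Finset.prod_insert ha, hibp]
    congr 1
    refine setIntegral_congr_fun measurableSet_Ioc fun r _ => ?_
    rw [Finset.sum_insert ha, Finset.erase_insert ha, Finset.mul_sum]
    congr 1
    refine Finset.sum_congr rfl fun j hj => ?_
    have haj : j ≠ a := by rintro rfl; exact ha hj
    rw [Finset.erase_insert_of_ne haj.symm,
      Finset.prod_insert (fun h => ha (Finset.mem_of_mem_erase h))]
    ring

lemma dense_of_null_compl {a b τ : ℝ} (hab : a < b) (hτ : τ ∈ Icc a b) {Z : Set ℝ}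
    (hnull : volume (Ioc a b \ Z) = 0) : τ ∈ closure Z := by
  rw [Metric.mem_closure_iff]
  intro ε hε
  have hhalf : 0 < ε / 2 := by linarith
  have main : ∀ c d : ℝ, c < d → Ioc c d ⊆ Ioc a b → ∃ z ∈ Z, z ∈ Ioc c d := by
    intro c d hcd hsub
    by_contra hempty
    push_neg at hempty
    have hsub2 : Ioc c d ⊆ Ioc a b \ Z := fun z hz => ⟨hsub hz, fun hzZ => hempty z hzZ hz⟩
    have h0 := measure_mono_null hsub2 hnull
    rw [Real.volume_Ioc] at h0
    rw [ENNReal.ofReal_eq_zero] at h0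
    linarith
  rcases lt_or_eq_of_le hτ.2 with hlt | heq
  · obtain ⟨z, hzZ, hz⟩ := main τ (min b (τ + ε / 2)) (lt_min hlt (by linarith))
      (fun w hw => ⟨lt_of_le_of_lt hτ.1 hw.1, hw.2.trans (min_le_left _ _)⟩)
    refine ⟨z, hzZ, ?_⟩
    rw [Real.dist_eq, abs_lt]
    have h2 := hz.2.trans (min_le_right b (τ + ε / 2))
    constructor
    · linarith [hz.1]
    · linarith [hz.1]
  · obtain ⟨z, hzZ, hz⟩ := main (max a (b - ε / 2)) b (max_lt hab (by linarith))
      (fun w hw => ⟨lt_of_le_of_lt (le_max_left a _) hw.1, hw.2⟩)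
    refine ⟨z, hzZ, ?_⟩
    rw [Real.dist_eq, abs_lt]
    have h1 : b - ε / 2 ≤ max a (b - ε / 2) := le_max_right _ _
    constructor
    · linarith [hz.1, hz.2]
    · linarith [hz.1, hz.2]

end AuxAnalysis

lemma simplex_bounds {Y : Finset A} {p : A → ℝ} (hp : p ∈ simplex Y) (a : A) :
    0 ≤ p a ∧ p a ≤ 1 := by
  obtain ⟨h0, hz, hs⟩ := hp
  refine ⟨h0 a, ?_⟩
  by_cases ha : a ∈ Y
  · calc p a ≤ ∑ b ∈ Y, p b := Finset.single_le_sum (fun b _ => h0 b) ha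
    _ = 1 := hs
  · rw [hz a ha]; exact zero_le_one

lemma U_update_sub (u : (ι → A) → ℝ) (p : ι → A → ℝ) (i : ι) (q : A → ℝ) :
    U u (Function.update p i q) - U u p
      = ∑ y : ι → A, u y * ((q (y i) - p i (y i)) * ∏ j ∈ Finset.univ.erase i, p j (y j)) := by
  show (∑ y : ι → A, u y * ∏ j, Function.update p i q j (y j))
      - (∑ y : ι → A, u y * ∏ j, p j (y j)) = _
  rw [← Finset.sum_sub_distrib]
  refine Finset.sum_congr rfl fun y _ => ?_
  have h1 : ∏ j, Function.update p i q j (y j)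
      = q (y i) * ∏ j ∈ Finset.univ.erase i, p j (y j) := by
    rw [← Finset.mul_prod_erase Finset.univ _ (Finset.mem_univ i), Function.update_self]
    congr 1
    refine Finset.prod_congr rfl fun j hj => ?_
    rw [Function.update_of_ne (Finset.ne_of_mem_erase hj)]
  have h2 : ∏ j, p j (y j) = p i (y i) * ∏ j ∈ Finset.univ.erase i, p j (y j) :=
    (Finset.mul_prod_erase Finset.univ _ (Finset.mem_univ i)).symm
  rw [h1, h2]; ring

lemma isClosed_NEcond (Y : ι → Finset A) (u : (ι → A) → ℝ) :
    IsClosed {p : ι → A → ℝ | ∀ i, ∀ qi ∈ simplex (Y i),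
      U u (Function.update p i qi) ≤ U u p} := by
  have hUc : Continuous (U u) := continuous_finset_sum _ fun y _ =>
    continuous_const.mul (continuous_finset_prod _ fun i _ =>
      (continuous_apply (y i)).comp (continuous_apply i))
  have hset : {p : ι → A → ℝ | ∀ i, ∀ qi ∈ simplex (Y i),
      U u (Function.update p i qi) ≤ U u p}
      = ⋂ (i : ι), ⋂ (qi : A → ℝ), ⋂ (_ : qi ∈ simplex (Y i)),
        {p : ι → A → ℝ | U u (Function.update p i qi) ≤ U u p} := by
    ext p; simp only [Set.mem_iInter, Set.mem_setOf_eq]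
  rw [hset]
  refine isClosed_iInter fun i => isClosed_iInter fun qi => isClosed_iInter fun _ => ?_
  have hupd : Continuous (fun p : ι → A → ℝ => Function.update p i qi) := by
    apply continuous_pi
    intro j
    by_cases hj : j = i
    · subst hj
      simp only [Function.update_self]
      exact continuous_const
    · simp only [Function.update_of_ne hj]
      exact continuous_apply j
  exact isClosed_le (hUc.comp hupd) hUc

/-- Along any class-constant-valued solution of the centroid CT-ECFP inclusion, and for any
nondegenerate interval `T ⊆ [0,∞)`, `t ↦ U(q̄^c(t))` is constant on `T` iff
`q̄^c(t) ∈ SNE` for every `t ∈ T`. -/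
theorem U_constant_iff_SNE
    (Y : ι → Finset A) (hY : ∀ i, (Y i).Nonempty) (u : (ι → A) → ℝ)
    (cls : ι → κ) (hpi : PermInvariant Y u cls)
    (x : ℝ → ι → A → ℝ) (hx : IsSolution Y (Fcent Y u) x)
    (hcc : ∀ t : ℝ, 0 ≤ t → classConst cls (x t))
    (T : Set ℝ) (hT : T ⊆ Set.Ici 0) (hTc : T.OrdConnected)
    (hTnd : ∃ s ∈ T, ∃ t ∈ T, s < t) :
    (∀ s ∈ T, ∀ t ∈ T, U u (x s) = U u (x t)) ↔ (∀ t ∈ T, x t ∈ SNE Y u cls) := by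
  classical
  obtain ⟨hmem, g, hgli, hgae, hrep⟩ := hx
  -- integrability of g on bounded subintervals of [0,∞)
  have hgI : ∀ {s t : ℝ}, 0 ≤ s → IntegrableOn g (Set.Ioc s t) := by
    intro s t hs
    refine (hgli.integrableOn_compact_subset (fun r hr => le_trans hs hr.1)
      isCompact_Icc).mono_set Set.Ioc_subset_Icc_self
  -- componentwise evaluation of vector set integrals
  have hval : ∀ {s t : ℝ}, 0 ≤ s → ∀ (i : ι) (a : A),
      (∫ r in Set.Ioc s t, g r) i a = ∫ r in Set.Ioc s t, g r i a := by
    intro s t hs i a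
    have h1 := (ContinuousLinearMap.proj (R := ℝ) (φ := fun _ : ι => A → ℝ)
      i).integral_comp_comm (hgI (t := t) hs)
    have hgi : Integrable (fun r => g r i) (volume.restrict (Set.Ioc s t)) := by
      have := (ContinuousLinearMap.proj (R := ℝ) (φ := fun _ : ι => A → ℝ)
        i).integrable_comp (hgI (t := t) hs)
      simpa [ContinuousLinearMap.proj_apply] using this
    have h2 := (ContinuousLinearMap.proj (R := ℝ) (φ := fun _ : A => ℝ)
      a).integral_comp_comm hgi
    simp only [ContinuousLinearMap.proj_apply] at h1 h2
    rw [← h1]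
    exact h2.symm
  have hgia : ∀ {s t : ℝ}, 0 ≤ s → ∀ (i : ι) (a : A),
      IntegrableOn (fun r => g r i a) (Set.Ioc s t) := by
    intro s t hs i a
    have hgi : Integrable (fun r => g r i) (volume.restrict (Set.Ioc s t)) := by
      have := (ContinuousLinearMap.proj (R := ℝ) (φ := fun _ : ι => A → ℝ)
        i).integrable_comp (hgI (t := t) hs)
      simpa [ContinuousLinearMap.proj_apply] using this
    have := (ContinuousLinearMap.proj (R := ℝ) (φ := fun _ : A => ℝ)
      a).integrable_comp hgi
    exact this
  -- componentwise integral representation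
  have hcomp : ∀ {s t : ℝ}, 0 ≤ s → ∀ (i : ι) (a : A), ∀ v ∈ Set.Icc s t,
      x v i a = x s i a + ∫ r in Set.Ioc s v, g r i a := by
    intro s t hs i a v hv
    have h0v : (0 : ℝ) ≤ v := le_trans hs hv.1
    have hsplit : (∫ r in Set.Ioc 0 v, g r)
        = (∫ r in Set.Ioc 0 s, g r) + ∫ r in Set.Ioc s v, g r := by
      rw [← Set.Ioc_union_Ioc_eq_Ioc hs hv.1]
      exact setIntegral_union (Set.Ioc_disjoint_Ioc_of_le le_rfl) measurableSet_Ioc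
        (hgI le_rfl) (hgI hs)
    have hxv : x v = x s + ∫ r in Set.Ioc s v, g r := by
      rw [hrep v h0v, hrep s hs, hsplit, add_assoc]
    calc x v i a = (x s + ∫ r in Set.Ioc s v, g r) i a := by rw [hxv]
    _ = x s i a + (∫ r in Set.Ioc s v, g r) i a := rfl
    _ = x s i a + ∫ r in Set.Ioc s v, g r i a := by rw [hval hs i a]
  -- entries of x lie in [0,1]
  have hx01 : ∀ {v : ℝ}, 0 ≤ v → ∀ (i : ι) (a : A), 0 ≤ x v i a ∧ x v i a ≤ 1 :=
    fun hv i a => simplex_bounds ((hmem _ hv) i) a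
  -- componentwise continuity
  have hxc : ∀ {s t : ℝ}, 0 ≤ s → ∀ (i : ι) (a : A),
      ContinuousOn (fun v => x v i a) (Set.Icc s t) := by
    intro s t hs i a
    by_cases hst : s ≤ t
    · have hc : ContinuousOn (fun v => x s i a + ∫ r in Set.Ioc s v, g r i a)
          (Set.Icc s t) :=
        continuousOn_const.add (intervalIntegral.continuousOn_primitive
          ((integrableOn_Icc_iff_integrableOn_Ioc).mpr (hgia hs i a)))
      exact hc.congr fun v hv => hcomp hs i a v hv
    · rw [Set.Icc_eq_empty hst]; exact continuousOn_empty _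
  -- the derivative integrand
  set ψ : ℝ → ℝ := fun r => ∑ y : ι → A, u y *
    ∑ i, g r i (y i) * ∏ j ∈ Finset.univ.erase i, x r j (y j) with hψdef
  -- integrability of the per-monomial derivative
  have hDint : ∀ {s t : ℝ}, 0 ≤ s → ∀ y : ι → A,
      IntegrableOn (fun r => ∑ i, g r i (y i) *
        ∏ j ∈ Finset.univ.erase i, x r j (y j)) (Set.Ioc s t) := by
    intro s t hs y
    apply integrable_finset_sum
    intro i _
    have hprodc : ContinuousOn (fun r => ∏ j ∈ Finset.univ.erase i, x r j (y j))
        (Set.Icc s t) := continuousOn_finset_prod _ fun j _ => hxc hs j (y j)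
    have hm : AEStronglyMeasurable (fun r => ∏ j ∈ Finset.univ.erase i, x r j (y j))
        (volume.restrict (Set.Ioc s t)) :=
      (hprodc.aestronglyMeasurable measurableSet_Icc).mono_measure
        (Measure.restrict_mono Set.Ioc_subset_Icc_self le_rfl)
    have hbnd : ∀ᵐ r ∂(volume.restrict (Set.Ioc s t)),
        ‖∏ j ∈ Finset.univ.erase i, x r j (y j)‖ ≤ 1 := by
      filter_upwards [ae_restrict_mem measurableSet_Ioc] with r hr
      rw [Real.norm_eq_abs, Finset.abs_prod]
      refine Finset.prod_le_one (fun j _ => abs_nonneg _) fun j _ => ?_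
      have h01 := hx01 (hs.trans hr.1.le) j (y j)
      rw [abs_of_nonneg h01.1]; exact h01.2
    exact (MeasureTheory.Integrable.bdd_mul (hgia hs i (y i)) hm hbnd).congr
      (Filter.Eventually.of_forall fun r => mul_comm _ _)
  have hψint : ∀ {s t : ℝ}, 0 ≤ s → IntegrableOn ψ (Set.Ioc s t) := by
    intro s t hs
    exact integrable_finset_sum _ fun y _ => (hDint hs y).const_mul (u y)
  -- the fundamental increment formula
  have key : ∀ {s t : ℝ}, 0 ≤ s → s ≤ t →
      U u (x t) = U u (x s) + ∫ r in Set.Ioc s t, ψ r := by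
    intro s t hs hst
    have hyrule : ∀ y : ι → A, (∏ i, x t i (y i)) = (∏ i, x s i (y i))
        + ∫ r in Set.Ioc s t, ∑ i, g r i (y i) *
          ∏ j ∈ Finset.univ.erase i, x r j (y j) := by
      intro y
      have := prod_rule (Finset.univ) (fun i r => x r i (y i)) (fun i r => g r i (y i))
        (fun i _ => hgia hs i (y i))
        (fun i _ v hv => by
          have h01 := hx01 (hs.trans hv.1) i (y i)
          rw [abs_of_nonneg h01.1]; exact h01.2)
        (fun i _ v hv => hcomp hs i (y i) v hv) t ⟨hst, le_rfl⟩
      simpa using this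
    show (∑ y : ι → A, u y * ∏ i, x t i (y i))
        = (∑ y : ι → A, u y * ∏ i, x s i (y i)) + ∫ r in Set.Ioc s t, ψ r
    calc (∑ y : ι → A, u y * ∏ i, x t i (y i))
        = ∑ y : ι → A, (u y * ∏ i, x s i (y i)
          + u y * ∫ r in Set.Ioc s t, ∑ i, g r i (y i) *
            ∏ j ∈ Finset.univ.erase i, x r j (y j)) := by
          refine Finset.sum_congr rfl fun y _ => ?_
          rw [hyrule y, mul_add]
    _ = (∑ y : ι → A, u y * ∏ i, x s i (y i))
        + ∑ y : ι → A, ∫ r in Set.Ioc s t, u y * ∑ i, g r i (y i) *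
            ∏ j ∈ Finset.univ.erase i, x r j (y j) := by
          rw [Finset.sum_add_distrib]
          congr 1
          exact Finset.sum_congr rfl fun y _ => (integral_const_mul _ _).symm
    _ = (∑ y : ι → A, u y * ∏ i, x s i (y i)) + ∫ r in Set.Ioc s t, ψ r := by
          congr 1
          exact (integral_finset_sum _ fun y _ => (hDint hs y).const_mul (u y)).symm
  -- pointwise structure of ψ where the differential inclusion holds
  have hterm : ∀ {r : ℝ}, 0 ≤ r → g r ∈ Fcent Y u (x r) →
      ∃ b, b ∈ BR Y u 0 (x r) ∧
        ψ r = (∑ i, (U u (Function.update (x r) i (b i)) - U u (x r))) ∧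
        (∀ i, 0 ≤ U u (Function.update (x r) i (b i)) - U u (x r)) := by
    intro r hr hF
    obtain ⟨b, hbBR, hbg⟩ := hF
    have hgr : ∀ (i : ι) (a' : A), g r i a' = b i a' - x r i a' := by
      intro i a'; rw [← hbg]; rfl
    refine ⟨b, hbBR, ?_, ?_⟩
    · show (∑ y : ι → A, u y * ∑ i, g r i (y i) *
          ∏ j ∈ Finset.univ.erase i, x r j (y j)) = _
      calc (∑ y : ι → A, u y * ∑ i, g r i (y i) *
            ∏ j ∈ Finset.univ.erase i, x r j (y j))
          = ∑ y : ι → A, ∑ i, u y * ((b i (y i) - x r i (y i)) *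
            ∏ j ∈ Finset.univ.erase i, x r j (y j)) := by
            refine Finset.sum_congr rfl fun y _ => ?_
            rw [Finset.mul_sum]
            refine Finset.sum_congr rfl fun i _ => ?_
            rw [hgr i (y i)]
      _ = ∑ i, ∑ y : ι → A, u y * ((b i (y i) - x r i (y i)) *
            ∏ j ∈ Finset.univ.erase i, x r j (y j)) := Finset.sum_comm
      _ = ∑ i, (U u (Function.update (x r) i (b i)) - U u (x r)) :=
            Finset.sum_congr rfl fun i _ => (U_update_sub u (x r) i (b i)).symm
    · intro i
      have h1 := (hbBR i).2 (x r i) ((hmem r hr) i)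
      rw [Function.update_eq_self, sub_zero] at h1
      linarith
  -- from NE membership and best responses, terms vanish; and conversely
  have hNEof : ∀ {p b : ι → A → ℝ}, p ∈ Delta Y → b ∈ BR Y u 0 p →
      (∀ i, U u (Function.update p i (b i)) = U u p) → p ∈ NE Y u := by
    intro p b hp hb heq
    refine ⟨hp, fun i qi hqi => ?_⟩
    have h2 := (hb i).2 qi hqi
    rw [sub_zero] at h2
    calc U u (Function.update p i qi) ≤ U u (Function.update p i (b i)) := h2
    _ = U u p := heq i
  constructor
  · -- constant ⇒ SNE everywhere on T
    intro hconst τ hτ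
    obtain ⟨s0, hs0T, t0, ht0T, hs0t0⟩ := hTnd
    have hs1T : min τ s0 ∈ T := by
      rcases min_choice τ s0 with h | h <;> rw [h] <;> assumption
    have ht1T : max τ t0 ∈ T := by
      rcases max_choice τ t0 with h | h <;> rw [h] <;> assumption
    have h0s1 : 0 ≤ min τ s0 := hT hs1T
    have hs1t1 : min τ s0 < max τ t0 :=
      lt_of_le_of_lt (min_le_right τ s0) (lt_of_lt_of_le hs0t0 (le_max_right τ t0))
    have hτI : τ ∈ Set.Icc (min τ s0) (max τ t0) := ⟨min_le_left _ _, le_max_left _ _⟩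
    have hae' : ∀ᵐ r ∂(volume.restrict (Set.Ioc (min τ s0) (max τ t0))),
        g r ∈ Fcent Y u (x r) :=
      ae_restrict_of_ae_restrict_of_subset (fun r hr => le_trans h0s1 hr.1.le) hgae
    have hnn : ∀ᵐ r ∂(volume.restrict (Set.Ioc (min τ s0) (max τ t0))), 0 ≤ ψ r := by
      filter_upwards [hae', ae_restrict_mem measurableSet_Ioc] with r hFr hrI
      obtain ⟨b, hbBR, hψr, hpos⟩ := hterm (le_trans h0s1 hrI.1.le) hFr
      rw [hψr]
      exact Finset.sum_nonneg fun i _ => hpos i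
    have hint0 : ∫ r in Set.Ioc (min τ s0) (max τ t0), ψ r = 0 := by
      have hk := key h0s1 hs1t1.le
      have hc := hconst _ hs1T _ ht1T
      linarith
    have haez : ψ =ᵐ[volume.restrict (Set.Ioc (min τ s0) (max τ t0))] 0 :=
      (integral_eq_zero_iff_of_nonneg_ae hnn (hψint h0s1)).mp hint0
    have hNEae : ∀ᵐ r ∂(volume.restrict (Set.Ioc (min τ s0) (max τ t0))),
        x r ∈ NE Y u := by
      filter_upwards [haez, hae', ae_restrict_mem measurableSet_Ioc] with r h0 hFr hrI
      have hr0 : (0 : ℝ) ≤ r := le_trans h0s1 hrI.1.le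
      obtain ⟨b, hbBR, hψr, hpos⟩ := hterm hr0 hFr
      have hsum0 : (∑ i, (U u (Function.update (x r) i (b i)) - U u (x r))) = 0 := by
        rw [← hψr]; simpa using h0
      have hzero := (Finset.sum_eq_zero_iff_of_nonneg (fun i _ => hpos i)).mp hsum0
      exact hNEof (hmem r hr0) hbBR fun i => by
        have := hzero i (Finset.mem_univ i); linarith
    -- null complement of the NE-times within the interval
    have hnull : volume (Set.Ioc (min τ s0) (max τ t0)
        \ (Set.Ioc (min τ s0) (max τ t0) ∩ {r | x r ∈ NE Y u})) = 0 := by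
      have h1 := hNEae
      rw [MeasureTheory.ae_iff, Measure.restrict_apply' measurableSet_Ioc] at h1
      refine measure_mono_null ?_ h1
      intro r hr
      exact ⟨fun hN => hr.2 ⟨hr.1, hN⟩, hr.1⟩
    have hZ : τ ∈ closure (Set.Ioc (min τ s0) (max τ t0) ∩ {r | x r ∈ NE Y u}) :=
      dense_of_null_compl hs1t1 hτI hnull
    have hxcont : ContinuousOn x (Set.Icc (min τ s0) (max τ t0)) :=
      continuousOn_pi.mpr fun i => continuousOn_pi.mpr fun a => hxc h0s1 i a
    have hcw : ContinuousWithinAt x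
        (Set.Ioc (min τ s0) (max τ t0) ∩ {r | x r ∈ NE Y u}) τ :=
      (hxcont τ hτI).mono fun r hr => Set.Ioc_subset_Icc_self hr.1
    have hcl := hcw.mem_closure_image hZ
    have himg : x '' (Set.Ioc (min τ s0) (max τ t0) ∩ {r | x r ∈ NE Y u})
        ⊆ {p : ι → A → ℝ | ∀ i, ∀ qi ∈ simplex (Y i),
          U u (Function.update p i qi) ≤ U u p} := by
      rintro p ⟨r, ⟨_, hrNE⟩, rfl⟩
      exact hrNE.2
    have hxτW := ((isClosed_NEcond Y u).closure_subset_iff.mpr himg) hcl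
    exact ⟨⟨hmem τ (hT hτ), hxτW⟩, hcc τ (hT hτ)⟩
  · -- SNE everywhere on T ⇒ constant
    intro hSNE
    have main : ∀ s ∈ T, ∀ t ∈ T, s ≤ t → U u (x s) = U u (x t) := by
      intro s hsT t htT hst
      have h0s : 0 ≤ s := hT hsT
      have hIcc : Set.Icc s t ⊆ T := hTc.out hsT htT
      have hz : ∫ r in Set.Ioc s t, ψ r = 0 := by
        apply integral_eq_zero_of_ae
        have hae' : ∀ᵐ r ∂(volume.restrict (Set.Ioc s t)), g r ∈ Fcent Y u (x r) :=
          ae_restrict_of_ae_restrict_of_subset (fun r hr => h0s.trans hr.1.le) hgae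
        filter_upwards [hae', ae_restrict_mem measurableSet_Ioc] with r hFr hrI
        have hr0 : (0 : ℝ) ≤ r := h0s.trans hrI.1.le
        obtain ⟨b, hbBR, hψr, hpos⟩ := hterm hr0 hFr
        have hrNE : x r ∈ NE Y u := (hSNE r (hIcc ⟨hrI.1.le, hrI.2⟩)).1
        have hzero : ∀ i ∈ Finset.univ,
            U u (Function.update (x r) i (b i)) - U u (x r) = 0 := fun i _ =>
          le_antisymm (by have := hrNE.2 i (b i) (hbBR i).1; linarith) (hpos i)
        show ψ r = 0
        rw [hψr]
        exact Finset.sum_eq_zero hzero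
      have hk := key h0s hst
      rw [hz, add_zero] at hk
      exact hk.symm
    intro s hs t ht
    rcases le_total s t with h | h
    exacts [main s hs t ht h, (main t ht s hs h).symm]

end ECFP
end
end
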